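/- For any linearly independent nonzero x, y in a normed plane there exists α ∈ ℝ such that x ⊣ αx + y; moreover any such α satisfies |α| ≤ ‖y‖/‖x‖. -/

import Mathlib

/-- Birkhoff normality: `x ⊣ y` iff `‖x‖ ≤ ‖x + t • y‖` for all `t`. -/
def BNormal {V : Type*} [NormedAddCommGroup V] [NormedSpace ℝ V] (x y : V) : Prop :=
  ∀ t : ℝ, ‖x‖ ≤ ‖x + t • y‖

/-- (James) For linearly independent `x, y` there is `α` with `x ⊣ α • x + y`, and any
such `α` satisfies `|α| ≤ ‖y‖ / ‖x‖`. -/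
theorem stmt10 {V : Type*} [NormedAddCommGroup V] [NormedSpace ℝ V]
    (hdim : Module.finrank ℝ V = 2)
    (x y : V) (hx : x ≠ 0) (hy : y ≠ 0)
    (hind : LinearIndependent ℝ ![x, y]) :
    (∃ α : ℝ, BNormal x (α • x + y)) ∧
    (∀ α : ℝ, BNormal x (α • x + y) → |α| ≤ ‖y‖ / ‖x‖) := by
  have hxn : (0:ℝ) < ‖x‖ := norm_pos_iff.2 hx
  constructor
  · obtain ⟨g, hg1, hgx⟩ := exists_dual_vector ℝ x (norm_ne_zero_iff.2 hx)
    set α : ℝ := -(g y) / ‖x‖ with hα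
    refine ⟨α, fun t => ?_⟩
    have hz : g (α • x + y) = 0 := by
      simp only [map_add, map_smul, smul_eq_mul, hgx, hα]
      field_simp
      simp
    calc ‖x‖ = g x := hgx.symm
      _ = g (x + t • (α • x + y)) := by rw [map_add, map_smul, hz, smul_eq_mul, mul_zero, add_zero]
      _ ≤ |g (x + t • (α • x + y))| := le_abs_self _
      _ ≤ ‖g‖ * ‖x + t • (α • x + y)‖ := g.le_opNorm _
      _ = ‖x + t • (α • x + y)‖ := by rw [hg1, one_mul]
  · intro α hα
    rcases eq_or_ne α 0 with rfl | h0
    · simp [div_nonneg, norm_nonneg]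
    · have h := hα (-1/α)
      have heq : x + (-1/α) • (α • x + y) = (-1/α) • y := by
        rw [smul_add, smul_smul]
        field_simp
        rw [neg_one_smul, add_neg_cancel_left]
      rw [heq, norm_smul] at h
      have h' : ‖x‖ ≤ (1 / |α|) * ‖y‖ := by
        simpa [abs_div] using h
      rw [le_div_iff₀ hxn]
      have hαpos : (0:ℝ) < |α| := abs_pos.2 h0
      calc |α| * ‖x‖ ≤ |α| * ((1 / |α|) * ‖y‖) := by
            exact mul_le_mul_of_nonneg_left h' hαpos.le
        _ = ‖y‖ := by field_simp
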